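/- Let pr₁: ℝ^m × ℝ^ℓ → ℝ^m and pr₂: ℝ^m × ℝ^ℓ → ℝ^ℓ be the coordinate projections. Let P ⊆ ℝ^m × ℝ^ℓ be a polytope, let x₁, x₂ be vertices of pr₁(P), and let y be a vertex of pr₂(P). If Conv(x₁, x₂) is an edge of pr₁(P) such that pr₁(Vertex(P)) ∩ Conv(x₁, x₂) = {x₁, x₂}, and (x₁, y), (x₂, y) ∈ P, then Conv((x₁,y), (x₂,y)) is an edge of P. -/

import Mathlib

/-- Auxiliary linear functional `z ↦ c * (v ⬝ z.1) + f z.2`. -/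
noncomputable def auxG {m ℓ : ℕ} (c : ℝ) (v : Fin m → ℝ) (f : (Fin ℓ → ℝ) →L[ℝ] ℝ) :
    ((Fin m → ℝ) × (Fin ℓ → ℝ)) →ₗ[ℝ] ℝ where
  toFun z := c * (∑ i, v i * z.1 i) + f z.2
  map_add' p q := by
    simp only [Prod.fst_add, Prod.snd_add, Pi.add_apply, mul_add, Finset.sum_add_distrib,
      map_add]
    ring
  map_smul' r p := by
    simp only [Prod.smul_fst, Prod.smul_snd, Pi.smul_apply, smul_eq_mul, map_smul,
      RingHom.id_apply]
    rw [mul_add]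
    congr 1
    rw [Finset.mul_sum, Finset.mul_sum]
    try rw [Finset.mul_sum]
    exact Finset.sum_congr rfl fun i _ => by ring

/-- If a linear functional `g` is bounded by `b` on a finite set `s`, then any point of
`convexHull ℝ s` where `g` attains the value `b` lies in the convex hull of the points of `s`
where `g` attains `b`. -/
theorem face_convexHull_subset {V : Type*} [AddCommGroup V] [Module ℝ V] (s : Finset V)
    (g : V →ₗ[ℝ] ℝ) (b : ℝ) (hb : ∀ e ∈ s, g e ≤ b) {z : V}
    (hz : z ∈ convexHull ℝ (s : Set V)) (hgz : g z = b) :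
    z ∈ convexHull ℝ {e ∈ (s : Set V) | g e = b} := by
  rw [Finset.convexHull_eq] at hz
  obtain ⟨w, hw0, hw1, hcm⟩ := hz
  rw [Finset.centerMass_eq_of_sum_1 _ _ hw1] at hcm
  simp only [id_eq] at hcm
  have hgsum : ∑ e ∈ s, w e * g e = b := by
    rw [← hgz, ← hcm, map_sum]
    exact Finset.sum_congr rfl fun e _ => by rw [map_smul, smul_eq_mul]
  have hzero : ∀ e ∈ s, w e * (b - g e) = 0 := by
    have hsum0 : ∑ e ∈ s, w e * (b - g e) = 0 := by
      have : ∑ e ∈ s, w e * (b - g e) = (∑ e ∈ s, w e) * b - ∑ e ∈ s, w e * g e := by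
        rw [Finset.sum_mul, ← Finset.sum_sub_distrib]
        exact Finset.sum_congr rfl fun e _ => by ring
      rw [this, hw1, hgsum, one_mul, sub_self]
    intro e he
    have hnn : ∀ e ∈ s, 0 ≤ w e * (b - g e) := fun e he =>
      mul_nonneg (hw0 e he) (sub_nonneg.2 (hb e he))
    exact (Finset.sum_eq_zero_iff_of_nonneg hnn).1 hsum0 e he
  set s' := s.filter (fun e => g e = b) with hs'
  have hwzero : ∀ e ∈ s, e ∉ s' → w e = 0 := by
    intro e he hes'
    have hgne : g e ≠ b := by
      intro h; exact hes' (Finset.mem_filter.2 ⟨he, h⟩)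
    have := hzero e he
    rcases mul_eq_zero.1 this with h | h
    · exact h
    · exact absurd (by linarith [sub_eq_zero.1 h] : g e = b) hgne
  have hw1' : ∑ e ∈ s', w e = 1 := by
    rw [← hw1]
    exact (Finset.sum_subset (Finset.filter_subset _ _) fun e he hes' =>
      hwzero e he hes')
  have hcm' : ∑ e ∈ s', w e • e = z := by
    rw [← hcm]
    exact (Finset.sum_subset (Finset.filter_subset _ _) fun e he hes' => by
      rw [hwzero e he hes', zero_smul])
  have : s'.centerMass w id = z := by
    rw [Finset.centerMass_eq_of_sum_1 _ _ hw1']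
    exact hcm'
  rw [← this]
  exact Finset.centerMass_mem_convexHull s' (fun e he => hw0 e (Finset.filter_subset _ _ he))
    (by rw [hw1']; norm_num)
    (fun e he => by
      obtain ⟨he1, he2⟩ := Finset.mem_filter.1 he
      exact ⟨he1, he2⟩)

/-- lifting an edge of the projection of a polytope.  If
`Conv(x₁,x₂)` is an edge of `pr₁(P)` whose intersection with the projections of
the vertices (extreme points) of `P` is exactly `{x₁,x₂}`, `y` is a vertex of
`pr₂(P)`, and `(x₁,y), (x₂,y) ∈ P`, then `Conv((x₁,y),(x₂,y))` is an edge of `P`. -/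
theorem stmt5 {m ℓ : ℕ}
    (S : Set ((Fin m → ℝ) × (Fin ℓ → ℝ))) (hSfin : S.Finite)
    (P : Set ((Fin m → ℝ) × (Fin ℓ → ℝ))) (hP : P = convexHull ℝ S)
    (x₁ x₂ : Fin m → ℝ) (y : Fin ℓ → ℝ) (hne : x₁ ≠ x₂)
    (hx₁ : x₁ ∈ Set.extremePoints ℝ (Prod.fst '' P))
    (hx₂ : x₂ ∈ Set.extremePoints ℝ (Prod.fst '' P))
    (hy : y ∈ Set.extremePoints ℝ (Prod.snd '' P))
    (hedge : ∃ (v : Fin m → ℝ) (a : ℝ),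
        (∀ x ∈ Prod.fst '' P, ∑ i, v i * x i ≤ a) ∧
        {x ∈ Prod.fst '' P | ∑ i, v i * x i = a} = segment ℝ x₁ x₂)
    (hvert : (Prod.fst '' Set.extremePoints ℝ P) ∩ segment ℝ x₁ x₂ = {x₁, x₂})
    (h1 : (x₁, y) ∈ P) (h2 : (x₂, y) ∈ P) :
    ∃ (w : (Fin m → ℝ) × (Fin ℓ → ℝ)) (b : ℝ),
      (∀ z ∈ P, (∑ i, w.1 i * z.1 i) + (∑ j, w.2 j * z.2 j) ≤ b) ∧
      {z ∈ P | (∑ i, w.1 i * z.1 i) + (∑ j, w.2 j * z.2 j) = b}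
        = segment ℝ (x₁, y) (x₂, y) := by
  classical
  obtain ⟨v, a, hva, hface⟩ := hedge
  have hPconv : Convex ℝ P := hP ▸ convex_convexHull ℝ S
  have hPcomp : IsCompact P := hP ▸ hSfin.isCompact_convexHull (𝕜 := ℝ)
  set E := Set.extremePoints ℝ P with hEdef
  have hEfin : E.Finite := hSfin.subset (by rw [hEdef, hP]; exact extremePoints_convexHull_subset)
  have hEP : E ⊆ P := extremePoints_subset
  have hPE : P = convexHull ℝ E := by
    have hKM := closure_convexHull_extremePoints hPcomp hPconv
    rw [← hEdef] at hKM
    rw [← hKM, (hEfin.isClosed_convexHull (𝕜 := ℝ)).closure_eq]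
  -- x₁, x₂ achieve value a
  have hvx₁ : ∑ i, v i * x₁ i = a := by
    have : x₁ ∈ {x ∈ Prod.fst '' P | ∑ i, v i * x i = a} := by
      rw [hface]; exact left_mem_segment ℝ x₁ x₂
    exact this.2
  have hvx₂ : ∑ i, v i * x₂ i = a := by
    have : x₂ ∈ {x ∈ Prod.fst '' P | ∑ i, v i * x i = a} := by
      rw [hface]; exact right_mem_segment ℝ x₁ x₂
    exact this.2
  -- classification of extreme points on the face
  have hclass : ∀ e ∈ E, (∑ i, v i * e.1 i = a) → e.1 = x₁ ∨ e.1 = x₂ := by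
    intro e heE hea
    have he1seg : e.1 ∈ segment ℝ x₁ x₂ := by
      rw [← hface]
      exact ⟨⟨e, hEP heE, rfl⟩, hea⟩
    have : e.1 ∈ ({x₁, x₂} : Set (Fin m → ℝ)) := by
      rw [← hvert]
      exact ⟨⟨e, heE, rfl⟩, he1seg⟩
    exact this
  -- the set of second coordinates of face extreme points, other than y
  set T : Set (Fin ℓ → ℝ) :=
    ((fun e : (Fin m → ℝ) × (Fin ℓ → ℝ) => e.2) '' {e ∈ E | ∑ i, v i * e.1 i = a}) \ {y}
    with hTdef
  have hTfin : T.Finite :=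
    ((hEfin.subset (Set.sep_subset _ _)).image _).subset Set.diff_subset
  have hTP : T ⊆ Prod.snd '' P := by
    rintro p ⟨⟨e, ⟨heE, _⟩, rfl⟩, _⟩
    exact ⟨e, hEP heE, rfl⟩
  have hyT : y ∉ convexHull ℝ T := by
    intro hyc
    have hsub : convexHull ℝ T ⊆ Prod.snd '' P := by
      refine convexHull_min hTP ?_
      have := hPconv.linear_image (LinearMap.snd ℝ (Fin m → ℝ) (Fin ℓ → ℝ))
      convert this using 2
      rfl
    have hyext : y ∈ Set.extremePoints ℝ (convexHull ℝ T) :=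
      inter_extremePoints_subset_extremePoints_of_subset hsub ⟨hyc, hy⟩
    have : y ∈ T := extremePoints_convexHull_subset hyext
    exact this.2 rfl
  obtain ⟨f, u₀, hfu, hufy⟩ := geometric_hahn_banach_closed_point
    (convex_convexHull ℝ T) (hTfin.isClosed_convexHull (𝕜 := ℝ)) hyT
  have hfT : ∀ p ∈ T, f p < f y := fun p hp =>
    (hfu p (subset_convexHull ℝ T hp)).trans hufy
  -- choose the constant c
  obtain ⟨M, hM⟩ := Finset.exists_le
    ((hEfin.toFinset.filter (fun e => ∑ i, v i * e.1 i ≠ a)).image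
      (fun e => (f e.2 - f y) / (a - ∑ i, v i * e.1 i)))
  set c : ℝ := max M 0 + 1 with hc
  have hMc : M < c := lt_of_le_of_lt (le_max_left M 0) (by rw [hc]; linarith)
  set G := auxG c v f with hG
  set b : ℝ := c * a + f y with hb
  -- G is bounded by b on E, with equality only at (x₁,y), (x₂,y)
  have hGe : ∀ e ∈ E, G e ≤ b ∧ (G e = b → e = (x₁, y) ∨ e = (x₂, y)) := by
    intro e heE
    have hGeval : G e = c * (∑ i, v i * e.1 i) + f e.2 := rfl
    by_cases hea : ∑ i, v i * e.1 i = a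
    · rw [hGeval, hea]
      by_cases he2 : e.2 = y
      · constructor
        · rw [he2, hb]
        · intro _
          rcases hclass e heE hea with h | h
          · left; exact Prod.ext h he2
          · right; exact Prod.ext h he2
      · have heT : e.2 ∈ T := ⟨⟨e, ⟨heE, hea⟩, rfl⟩, he2⟩
        have : f e.2 < f y := hfT e.2 heT
        constructor
        · rw [hb]; linarith
        · intro h; rw [hb] at h; linarith
    · have h1e : e.1 ∈ Prod.fst '' P := ⟨e, hEP heE, rfl⟩
      have hle : ∑ i, v i * e.1 i ≤ a := hva e.1 h1e
      have hlt : ∑ i, v i * e.1 i < a := lt_of_le_of_ne hle hea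
      have hpos : 0 < a - ∑ i, v i * e.1 i := by linarith
      have hmem : e ∈ hEfin.toFinset.filter (fun e => ∑ i, v i * e.1 i ≠ a) :=
        Finset.mem_filter.2 ⟨hEfin.mem_toFinset.2 heE, hea⟩
      have hMe : (f e.2 - f y) / (a - ∑ i, v i * e.1 i) ≤ M :=
        hM _ (Finset.mem_image.2 ⟨e, hmem, rfl⟩)
      have hce : (f e.2 - f y) / (a - ∑ i, v i * e.1 i) < c := lt_of_le_of_lt hMe hMc
      have : f e.2 - f y < c * (a - ∑ i, v i * e.1 i) := (div_lt_iff₀ hpos).1 hce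
      have hGlt : G e < b := by
        rw [hGeval, hb]
        nlinarith
      exact ⟨le_of_lt hGlt, fun h => absurd h (ne_of_lt hGlt)⟩
  -- the functional in the statement agrees with G
  set w : (Fin m → ℝ) × (Fin ℓ → ℝ) :=
    (c • v, fun i => f (fun j => if i = j then 1 else 0)) with hw
  have hkey : ∀ z : (Fin m → ℝ) × (Fin ℓ → ℝ),
      (∑ i, w.1 i * z.1 i) + (∑ j, w.2 j * z.2 j) = G z := by
    intro z
    have h1' : ∑ i, w.1 i * z.1 i = c * ∑ i, v i * z.1 i := by
      rw [Finset.mul_sum]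
      exact Finset.sum_congr rfl fun i _ => by
        simp [hw, smul_eq_mul]; ring
    have h2' : ∑ j, w.2 j * z.2 j = f z.2 := by
      have hpi := LinearMap.pi_apply_eq_sum_univ (f : (Fin ℓ → ℝ) →ₗ[ℝ] ℝ) z.2
      simp only [ContinuousLinearMap.coe_coe] at hpi
      rw [hpi]
      exact Finset.sum_congr rfl fun j _ => by
        simp only [hw, smul_eq_mul]; ring
    rw [h1', h2']
    rfl
  have hGx₁ : G (x₁, y) = b := by
    show c * (∑ i, v i * x₁ i) + f y = b
    rw [hvx₁, hb]
  have hGx₂ : G (x₂, y) = b := by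
    show c * (∑ i, v i * x₂ i) + f y = b
    rw [hvx₂, hb]
  have hmax : ∀ z ∈ P, G z ≤ b := by
    intro z hz
    rw [hPE] at hz
    have hhalf : Convex ℝ {z : (Fin m → ℝ) × (Fin ℓ → ℝ) | G z ≤ b} :=
      convex_halfSpace_le ⟨G.map_add, G.map_smul⟩ b
    exact convexHull_min (fun e he => (hGe e he).1) hhalf hz
  refine ⟨w, b, ?_, ?_⟩
  · intro z hz
    rw [hkey z]
    exact hmax z hz
  · apply Set.Subset.antisymm
    · -- face ⊆ segment
      rintro z ⟨hzP, hzb⟩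
      rw [hkey z] at hzb
      have hzE : z ∈ convexHull ℝ (hEfin.toFinset : Set ((Fin m → ℝ) × (Fin ℓ → ℝ))) := by
        rw [hEfin.coe_toFinset, ← hPE]
        exact hzP
      have hzface : z ∈ convexHull ℝ
          {e ∈ (hEfin.toFinset : Set ((Fin m → ℝ) × (Fin ℓ → ℝ))) | G e = b} :=
        face_convexHull_subset hEfin.toFinset G b
          (fun e he => (hGe e (hEfin.mem_toFinset.1 he)).1) hzE hzb
      have hsub2 : {e ∈ (hEfin.toFinset : Set ((Fin m → ℝ) × (Fin ℓ → ℝ))) | G e = b}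
          ⊆ {(x₁, y), (x₂, y)} := by
        rintro e ⟨heE, heb⟩
        exact (hGe e (hEfin.mem_toFinset.1 heE)).2 heb
      have := convexHull_mono hsub2 hzface
      rwa [convexHull_pair] at this
    · -- segment ⊆ face
      intro z hz
      have hzP : z ∈ P := hPconv.segment_subset h1 h2 hz
      refine ⟨hzP, ?_⟩
      rw [hkey z]
      obtain ⟨α, β, hα, hβ, hαβ, hzeq⟩ := hz
      rw [← hzeq, map_add, map_smul, map_smul, smul_eq_mul, smul_eq_mul, hGx₁, hGx₂]
      linear_combination b * hαβ
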